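/- arXiv:math/0512227 — 2 statements merged into one kernel-verified Lean document; each statement's English description precedes it below -/
import Mathlib

section
/- For all set compositions P ∈ Comp_p and Q ∈ Comp_q, the difference P ∗̂ Q − P ∗̄ Q lies in the ℤ-span of the set compositions U ∈ Comp_{p+q} satisfying P ∗̄ Q ≪ U; in other words, P ∗̂ Q equals P ∗̄ Q plus a ℤ-linear combination of set compositions strictly greater than P ∗̄ Q in the order ≪. -/
set_option linter.unreachableTactic false
set_option linter.unusedTactic false
set_option maxHeartbeats 1000000


open Finset

/-- Candidate set compositions: lists of finite sets of positive naturals. -/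
abbrev SC : Type := List (Finset ℕ)

/-- The underlying (ground) set of a list of blocks. -/
def ground (L : SC) : Finset ℕ := L.foldr (· ∪ ·) ∅

/-- `L` is a set composition of `[n] = {1,…,n}`. -/
def IsSetComp (n : ℕ) (L : SC) : Prop :=
  (∀ B ∈ L, B.Nonempty) ∧ L.Pairwise Disjoint ∧ ground L = Finset.Icc 1 n

/-- The degree of a set composition (largest element of its ground set). -/
def maxG (L : SC) : ℕ := (ground L).sup id

/-- The 1-based rank of `x` inside the finite set `A` (the position of `x` in the
increasing enumeration of `A`, when `x ∈ A`); this is the order preserving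
relabelling `A → [|A|]`. -/
def rankIn (A : Finset ℕ) (x : ℕ) : ℕ := (A.filter (· ≤ x)).card

/-- `P|_A` : intersect the blocks with `A`, delete the empty intersections, and
relabel along the order preserving bijection `A → [|A|]`. -/
def restrictSC (A : Finset ℕ) (L : SC) : SC :=
  (L.map fun B => (B ∩ A).image (rankIn A)).filter fun B => decide B.Nonempty

/-- Shift all entries of all blocks by `p`. -/
def shiftSC (p : ℕ) (L : SC) : SC := L.map (Finset.image (· + p))

/-- The restricted product `∗̄` on set compositions:
`P ∗̄ Q = (P₁,…,P_k, p+Q₁,…,p+Q_l)` for `P ∈ Comp_p`. -/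
def barMul (P Q : SC) : SC := P ++ shiftSC (maxG P) Q

/-- The order-preserving relabelling map `S → T` (`is_{S,T}`), for finite sets
of equal cardinality. -/
def relabelFun (S T : Finset ℕ) (x : ℕ) : ℕ := (T.sort (· ≤ ·)).getD (rankIn S x - 1) 0

/-- Relabel a set composition of `S` along the order-preserving bijection `S → T`. -/
def relabelSC (S T : Finset ℕ) (L : SC) : SC := L.map (Finset.image (relabelFun S T))

variable (R : Type) [CommRing R]

/-- The free module with basis indexed by lists of blocks; the twisted descent
algebra `T_•` is its submodule spanned by the set compositions. -/
abbrev FM := SC →₀ R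

/-- `T_•` as a submodule: the span of the set compositions. -/
noncomputable def Tspan : Submodule R (FM R) :=
  Submodule.span R {f : FM R | ∃ n P, IsSetComp n P ∧ f = Finsupp.single P 1}

/-- The restricted product `∗̄` as a bilinear map. -/
noncomputable def barL : FM R →ₗ[R] FM R →ₗ[R] FM R :=
  Finsupp.lift _ R SC fun P => Finsupp.lift _ R SC fun Q => Finsupp.single (barMul P Q) 1

/-- The symmetrized product `∗̂` on basis elements:
`P ∗̂ Q = Σ is_{[p],A}(P) ∗ is_{[q],B}(Q)` over all `A ⊔ B = [p+q]`, `|A| = p`. -/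
noncomputable def hatB (P Q : SC) : FM R :=
  ∑ A ∈ (Finset.Icc 1 (maxG P + maxG Q)).powerset.filter (fun A => A.card = maxG P),
    Finsupp.single
      (relabelSC (Finset.Icc 1 (maxG P)) A P ++
        relabelSC (Finset.Icc 1 (maxG Q)) ((Finset.Icc 1 (maxG P + maxG Q)) \ A) Q) 1

/-- The symmetrized product `∗̂` as a bilinear map. -/
noncomputable def hatL : FM R →ₗ[R] FM R →ₗ[R] FM R :=
  Finsupp.lift _ R SC fun P => Finsupp.lift _ R SC fun Q => hatB R P Q

/-- `T_• ⊗ T_•`, realized as the free module on pairs of basis elements. -/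
abbrev FM2 := (SC × SC) →₀ R

/-- `T_• ⊗ T_• ⊗ T_•`, realized as the free module on triples of basis elements. -/
abbrev FM3 := (SC × SC × SC) →₀ R

/-- The restricted coproduct `δ̄ (P) = Σ_{p=0}^n P|_{[p]} ⊗ P|_{{p+1,…,n}}`. -/
noncomputable def dBarL : FM R →ₗ[R] FM2 R :=
  Finsupp.lift _ R SC fun P =>
    ∑ p ∈ Finset.range (maxG P + 1),
      Finsupp.single
        (restrictSC (Finset.Icc 1 p) P, restrictSC (Finset.Icc (p+1) (maxG P)) P) 1

/-- The cosymmetrized coproduct `δ̂ (P) = Σ_{A ⊔ B = [n]} P|_A ⊗ P|_B`. -/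
noncomputable def dHatL : FM R →ₗ[R] FM2 R :=
  Finsupp.lift _ R SC fun P =>
    ∑ A ∈ (Finset.Icc 1 (maxG P)).powerset,
      Finsupp.single (restrictSC A P, restrictSC ((Finset.Icc 1 (maxG P)) \ A) P) 1

/-- Apply a coproduct to the first tensor factor:  `d ⊗ id : T⊗T → T⊗T⊗T`. -/
noncomputable def applyFst (d : FM R →ₗ[R] FM2 R) : FM2 R →ₗ[R] FM3 R :=
  Finsupp.lift _ R (SC × SC) fun PQ =>
    Finsupp.mapDomain (fun RS : SC × SC => (RS.1, RS.2, PQ.2)) (d (Finsupp.single PQ.1 1))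

/-- Apply a coproduct to the second tensor factor:  `id ⊗ d : T⊗T → T⊗T⊗T`. -/
noncomputable def applySnd (d : FM R →ₗ[R] FM2 R) : FM2 R →ₗ[R] FM3 R :=
  Finsupp.lift _ R (SC × SC) fun PQ =>
    Finsupp.mapDomain (fun RS : SC × SC => (PQ.1, RS.1, RS.2)) (d (Finsupp.single PQ.2 1))

/-- `ε ⊗ id : T⊗T → T`, where `ε` is the projection onto `T_0 ≅ R`
(the coefficient of the empty set composition). -/
noncomputable def epsFst : FM2 R →ₗ[R] FM R :=
  Finsupp.lift _ R (SC × SC) fun PQ =>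
    if PQ.1 = ([] : SC) then Finsupp.single PQ.2 1 else 0

/-- `id ⊗ ε : T⊗T → T`. -/
noncomputable def epsSnd : FM2 R →ₗ[R] FM R :=
  Finsupp.lift _ R (SC × SC) fun PQ =>
    if PQ.2 = ([] : SC) then Finsupp.single PQ.1 1 else 0

/-- The twist map `x ⊗ y ↦ y ⊗ x` on `T_• ⊗ T_•`. -/
noncomputable def twistL : FM2 R →ₗ[R] FM2 R :=
  Finsupp.lift _ R (SC × SC) fun PQ => Finsupp.single (PQ.2, PQ.1) 1

/-- The counit: projection onto the degree-0 component `T_0 ≅ R`. -/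
noncomputable def counitL : FM R →ₗ[R] R :=
  Finsupp.lift _ R SC fun P => if P = ([] : SC) then 1 else 0

/-- `L` is a set composition of the finite set `A`. -/
def IsSetCompOf (A : Finset ℕ) (L : SC) : Prop :=
  (∀ B ∈ L, B.Nonempty) ∧ L.Pairwise Disjoint ∧ ground L = A

/-- The word over the alphabet `ℕ̄ = ℕ ∪ {,}` (with the comma encoded as `⊥`)
associated with a set composition: each block is written as the increasing
sequence of its elements and consecutive blocks are separated by a comma. -/
def wordOf (L : SC) : List (WithBot ℕ) :=
  List.intercalate [(⊥ : WithBot ℕ)]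
    (L.map fun B => (B.sort (· ≤ ·)).map (fun x => (x : WithBot ℕ)))

/-- The strict total order `≪` on set compositions: compare first the sizes of
the ground sets, then the associated words lexicographically (`, < 1 < 2 < ⋯`). -/
def llOrd (P Q : SC) : Prop :=
  (ground P).card < (ground Q).card ∨
    ((ground P).card = (ground Q).card ∧ List.Lex (· < ·) (wordOf P) (wordOf Q))

section AuxLemmas

lemma sort_Icc (a b : ℕ) : (Finset.Icc a b).sort (· ≤ ·) = List.range' a (b+1-a) := by
  apply List.Perm.eq_of_pairwise' (Finset.pairwise_sort _ _)
    ((List.pairwise_lt_range' 1 (by omega)).imp le_of_lt) ((Finset.sort_perm_toList _ _).trans ?_)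
  rw [Finset.toList, Nat.Icc_eq_range']
  exact Quotient.exact (Multiset.coe_toList _)

lemma mem_ground {L : SC} {x : ℕ} : x ∈ ground L ↔ ∃ B ∈ L, x ∈ B := by
  induction L with
  | nil => simp [ground]
  | cons B L ih =>
      show x ∈ B ∪ ground L ↔ _
      simp [Finset.mem_union, ih]

lemma subset_ground {L : SC} {B : Finset ℕ} (h : B ∈ L) : B ⊆ ground L :=
  fun x hx => mem_ground.2 ⟨B, h, hx⟩

lemma ground_append (L1 L2 : SC) : ground (L1 ++ L2) = ground L1 ∪ ground L2 := by
  induction L1 with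
  | nil => simp [ground]
  | cons B L1 ih =>
      show B ∪ ground (L1 ++ L2) = (B ∪ ground L1) ∪ ground L2
      rw [ih, Finset.union_assoc]

lemma ground_map_image (g : ℕ → ℕ) (L : SC) :
    ground (L.map (Finset.image g)) = (ground L).image g := by
  induction L with
  | nil => simp [ground]
  | cons B L ih =>
      show B.image g ∪ ground (L.map (Finset.image g)) = (B ∪ ground L).image g
      rw [ih, Finset.image_union]

lemma maxG_eq {n : ℕ} {L : SC} (h : ground L = Finset.Icc 1 n) : maxG L = n := by
  unfold maxG
  rw [h]
  rcases Nat.eq_zero_or_pos n with h0 | h0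
  · subst h0; simp
  · exact le_antisymm (Finset.sup_le fun x hx => (Finset.mem_Icc.1 hx).2)
      (Finset.le_sup (f := id) (Finset.mem_Icc.2 ⟨h0, le_rfl⟩))

lemma rankIn_Icc {p x : ℕ} (h1 : 1 ≤ x) (h2 : x ≤ p) : rankIn (Finset.Icc 1 p) x = x := by
  unfold rankIn
  rw [show (Finset.Icc 1 p).filter (· ≤ x) = Finset.Icc 1 x by
    ext y; simp [Finset.mem_Icc, Finset.mem_filter]; omega]
  rw [Nat.card_Icc]; omega

lemma relabelFun_eq_get {p x : ℕ} {T : Finset ℕ} (hc : T.card = p) (h1 : 1 ≤ x) (h2 : x ≤ p) :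
    relabelFun (Finset.Icc 1 p) T x =
      (T.sort (· ≤ ·))[x-1]'(by rw [Finset.length_sort, hc]; omega) := by
  unfold relabelFun
  rw [rankIn_Icc h1 h2, List.getD_eq_getElem]

lemma sorted_get_ge {l : List ℕ} (hs : l.Pairwise (· < ·)) (h1 : ∀ y ∈ l, 1 ≤ y) :
    ∀ i (h : i < l.length), i + 1 ≤ l[i] := by
  intro i
  induction i with
  | zero => intro h; exact h1 _ (l.getElem_mem h)
  | succ i ih =>
      intro h
      have h2 : l[i]'(by omega) < l[i+1] := by
        have := List.pairwise_iff_getElem.1 hs i (i+1) (by omega) h (by omega)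
        simpa [List.get_eq_getElem] using this
      have := ih (by omega)
      omega

lemma sorted_gt_propagate {l : List ℕ} (hs : l.Pairwise (· < ·)) :
    ∀ i j (hij : i ≤ j) (hj : j < l.length), i + 2 ≤ l[i]'(by omega) → j + 2 ≤ l[j] := by
  intro i j hij
  induction j, hij using Nat.le_induction with
  | base => intro hj hi; exact hi
  | succ j hij ih =>
      intro hj hi
      have h2 : l[j]'(by omega) < l[j+1] := by
        have := List.pairwise_iff_getElem.1 hs j (j+1) (by omega) hj (by omega)
        simpa [List.get_eq_getElem] using this
      have := ih (by omega) hi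
      omega

lemma relabelFun_mem {p x : ℕ} {T : Finset ℕ} (hc : T.card = p) (h1 : 1 ≤ x) (h2 : x ≤ p) :
    relabelFun (Finset.Icc 1 p) T x ∈ T := by
  rw [relabelFun_eq_get hc h1 h2]
  exact (Finset.mem_sort _).1 (List.getElem_mem _)

lemma relabelFun_ge {p x : ℕ} {T : Finset ℕ} (hpos : ∀ t ∈ T, 1 ≤ t) (hc : T.card = p)
    (h1 : 1 ≤ x) (h2 : x ≤ p) : x ≤ relabelFun (Finset.Icc 1 p) T x := by
  rw [relabelFun_eq_get hc h1 h2]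
  have := sorted_get_ge (Finset.sortedLT_sort T).pairwise
    (fun y hy => hpos y ((Finset.mem_sort _).1 hy)) (x-1)
    (by rw [Finset.length_sort, hc]; omega)
  omega

lemma relabelFun_strictMonoOn {p x y : ℕ} {T : Finset ℕ} (hc : T.card = p)
    (h1 : 1 ≤ x) (hxy : x < y) (h2 : y ≤ p) :
    relabelFun (Finset.Icc 1 p) T x < relabelFun (Finset.Icc 1 p) T y := by
  rw [relabelFun_eq_get hc h1 (by omega), relabelFun_eq_get hc (by omega) h2]
  have := List.pairwise_iff_getElem.1 (Finset.sortedLT_sort T).pairwise (x-1) (y-1)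
    (by rw [Finset.length_sort, hc]; omega)
    (by rw [Finset.length_sort, hc]; omega) (by omega)
  simpa [List.get_eq_getElem] using this

lemma relabelFun_injOn {p x y : ℕ} {T : Finset ℕ} (hc : T.card = p)
    (hx1 : 1 ≤ x) (hx2 : x ≤ p) (hy1 : 1 ≤ y) (hy2 : y ≤ p)
    (h : relabelFun (Finset.Icc 1 p) T x = relabelFun (Finset.Icc 1 p) T y) : x = y := by
  rcases lt_trichotomy x y with hlt | he | hlt
  · exact absurd h (ne_of_lt (relabelFun_strictMonoOn hc hx1 hlt hy2))
  · exact he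
  · exact absurd h.symm (ne_of_lt (relabelFun_strictMonoOn hc hy1 hlt hx2))

lemma relabelFun_image {p : ℕ} {T : Finset ℕ} (hc : T.card = p) :
    (Finset.Icc 1 p).image (relabelFun (Finset.Icc 1 p) T) = T := by
  apply Finset.eq_of_subset_of_card_le
  · intro t ht
    obtain ⟨x, hx, rfl⟩ := Finset.mem_image.1 ht
    rw [Finset.mem_Icc] at hx
    exact relabelFun_mem hc hx.1 hx.2
  · rw [hc, Finset.card_image_of_injOn, Nat.card_Icc]
    · omega
    · intro x hx y hy h
      rw [Finset.coe_Icc, Set.mem_Icc] at hx hy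
      exact relabelFun_injOn hc hx.1 hx.2 hy.1 hy.2 h

lemma relabelFun_threshold {p : ℕ} {T : Finset ℕ} (hpos : ∀ t ∈ T, 1 ≤ t) (hc : T.card = p)
    (hne : T ≠ Finset.Icc 1 p) :
    ∃ x₀, (1 ≤ x₀ ∧ x₀ ≤ p) ∧
      (∀ y, 1 ≤ y → y < x₀ → relabelFun (Finset.Icc 1 p) T y = y) ∧
      (∀ y, x₀ ≤ y → y ≤ p → y < relabelFun (Finset.Icc 1 p) T y) := by
  set g := relabelFun (Finset.Icc 1 p) T with hg
  set S := (Finset.Icc 1 p).filter (fun x => g x ≠ x) with hS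
  have hSne : S.Nonempty := by
    rw [Finset.filter_nonempty_iff]
    by_contra hcon
    push_neg at hcon
    apply hne
    rw [← relabelFun_image hc]
    rw [show (Finset.Icc 1 p).image g = (Finset.Icc 1 p).image id from
      Finset.image_congr fun x hx => hcon x hx, Finset.image_id]
  have hx₀S : S.min' hSne ∈ S := S.min'_mem hSne
  set x₀ := S.min' hSne with hx0
  rw [hS, Finset.mem_filter, Finset.mem_Icc] at hx₀S
  have hmin : ∀ y ∈ S, x₀ ≤ y := fun y hy => S.min'_le y hy
  refine ⟨x₀, ⟨hx₀S.1.1, hx₀S.1.2⟩, ?_, ?_⟩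
  · intro y hy1 hy2
    by_contra hcon
    have hyS : y ∈ S := by
      rw [hS, Finset.mem_filter, Finset.mem_Icc]
      exact ⟨⟨hy1, by omega⟩, hcon⟩
    exact absurd (hmin y hyS) (by omega)
  · intro y hy1 hy2
    have hge := relabelFun_ge hpos hc hx₀S.1.1 hx₀S.1.2
    rw [← hg] at hge
    have hx0gt : x₀ + 1 ≤ g x₀ := by
      have := hx₀S.2
      omega
    rw [hg, relabelFun_eq_get hc (by omega) hy2]
    have hkey := sorted_gt_propagate (Finset.sortedLT_sort T).pairwise (x₀ - 1) (y - 1)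
      (by omega) (by rw [Finset.length_sort, hc]; omega) ?_
    · omega
    · rw [hg, relabelFun_eq_get hc hx₀S.1.1 hx₀S.1.2] at hx0gt
      omega

end AuxLemmas

section Part2

lemma relabelFun_Icc_self {p x : ℕ} (h1 : 1 ≤ x) (h2 : x ≤ p) :
    relabelFun (Finset.Icc 1 p) (Finset.Icc 1 p) x = x := by
  rw [relabelFun_eq_get (by rw [Nat.card_Icc]; omega) h1 h2]
  simp only [sort_Icc, List.getElem_range']
  omega

lemma relabelFun_Icc_shift {p q x : ℕ} (h1 : 1 ≤ x) (h2 : x ≤ q) :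
    relabelFun (Finset.Icc 1 q) (Finset.Icc (p+1) (p+q)) x = x + p := by
  rw [relabelFun_eq_get (by rw [Nat.card_Icc]; omega) h1 h2]
  simp only [sort_Icc, List.getElem_range']
  omega

lemma relabelSC_self {p : ℕ} {P : SC} (hP : ground P = Finset.Icc 1 p) :
    relabelSC (Finset.Icc 1 p) (Finset.Icc 1 p) P = P := by
  unfold relabelSC
  conv_rhs => rw [← List.map_id P]
  apply List.map_congr_left
  intro B hB
  rw [show Finset.image (relabelFun (Finset.Icc 1 p) (Finset.Icc 1 p)) B = Finset.image id B from
    Finset.image_congr fun x hx => by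
      have := subset_ground hB hx
      rw [hP, Finset.mem_Icc] at this
      exact relabelFun_Icc_self this.1 this.2]
  simp

lemma relabelSC_shift {p q : ℕ} {Q : SC} (hQ : ground Q = Finset.Icc 1 q) :
    relabelSC (Finset.Icc 1 q) (Finset.Icc (p+1) (p+q)) Q = shiftSC p Q := by
  unfold relabelSC shiftSC
  apply List.map_congr_left
  intro B hB
  apply Finset.image_congr
  intro x hx
  have := subset_ground hB hx
  rw [hQ, Finset.mem_Icc] at this
  exact relabelFun_Icc_shift this.1 this.2

lemma sort_image {B : Finset ℕ} {g : ℕ → ℕ} (h : ∀ x ∈ B, ∀ y ∈ B, x < y → g x < g y) :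
    (B.image g).sort (· ≤ ·) = (B.sort (· ≤ ·)).map g := by
  have hinj : Set.InjOn g ↑B := by
    intro x hx y hy hxy
    rcases lt_trichotomy x y with hlt | he | hlt
    · exact absurd hxy (ne_of_lt (h x hx y hy hlt))
    · exact he
    · exact absurd hxy.symm (ne_of_lt (h y hy x hx hlt))
  have hperm : ((B.sort (· ≤ ·)).map g).Perm ((B.image g).sort (· ≤ ·)) := by
    apply Multiset.coe_eq_coe.mp
    rw [show (((B.sort (· ≤ ·)).map g : List ℕ) : Multiset ℕ)
        = Multiset.map g (B.sort (· ≤ ·) : List ℕ) from (Multiset.map_coe _ _).symm]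
    rw [Finset.sort_eq, Finset.sort_eq, Finset.image_val_of_injOn hinj]
  have hsorted : ((B.sort (· ≤ ·)).map g).Pairwise (· ≤ ·) := by
    rw [List.pairwise_map]
    apply List.Pairwise.imp_of_mem ?_ (Finset.sortedLT_sort B).pairwise
    intro a b ha hb hab
    exact le_of_lt (h a ((Finset.mem_sort _).1 ha) b ((Finset.mem_sort _).1 hb) hab)
  exact (List.Perm.eq_of_pairwise' hsorted (Finset.pairwise_sort _ _) hperm).symm

lemma map_intercalate {f : WithBot ℕ → WithBot ℕ} (hf : f ⊥ = ⊥)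
    (ls : List (List (WithBot ℕ))) :
    (List.intercalate [(⊥ : WithBot ℕ)] ls).map f =
      List.intercalate [(⊥ : WithBot ℕ)] (ls.map (List.map f)) := by
  induction ls with
  | nil => simp [List.intercalate]
  | cons a ls ih =>
      cases ls with
      | nil => simp [List.intercalate]
      | cons b ls =>
          simp only [List.intercalate, List.map_cons, List.intersperse_cons_cons,
            List.flatten_cons, List.map_append] at ih ⊢
          rw [ih]
          simp [hf]

lemma map_coe_eq (l : List ℕ) :
    l.map (fun x => (x : WithBot ℕ)) = l.map WithBot.some := by
  induction l with
  | nil => rfl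
  | cons a l ih => show _ :: _ = _ :: _; rw [← ih]; rfl

lemma wordOf_eq (L : SC) :
    wordOf L = List.intercalate [(⊥ : WithBot ℕ)]
      (L.map fun B => (B.sort (· ≤ ·)).map WithBot.some) := by
  unfold wordOf
  congr 1
  exact List.map_congr_left fun B _ => map_coe_eq _

lemma wordOf_cons {B : Finset ℕ} {L : SC} (h : L ≠ []) :
    wordOf (B :: L) = ((B.sort (· ≤ ·)).map WithBot.some) ++ ⊥ :: wordOf L := by
  obtain ⟨C, L', rfl⟩ := List.exists_cons_of_ne_nil h
  rw [wordOf_eq, wordOf_eq]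
  simp [List.intercalate, List.intersperse_cons_cons]

lemma wordOf_singleton (B : Finset ℕ) :
    wordOf [B] = (B.sort (· ≤ ·)).map WithBot.some := by
  rw [wordOf_eq]
  simp [List.intercalate]

lemma wordOf_append {L1 L2 : SC} (h1 : L1 ≠ []) (h2 : L2 ≠ []) :
    wordOf (L1 ++ L2) = wordOf L1 ++ ⊥ :: wordOf L2 := by
  induction L1 with
  | nil => exact absurd rfl h1
  | cons B L1 ih =>
      cases L1 with
      | nil => rw [List.singleton_append, wordOf_cons h2, wordOf_singleton]
      | cons C L1 =>
          rw [List.cons_append, wordOf_cons (by simp), wordOf_cons (by simp),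
            ih (by simp)]
          simp

lemma wordOf_map_image {g : ℕ → ℕ} {L : SC}
    (h : ∀ B ∈ L, ∀ x ∈ B, ∀ y ∈ B, x < y → g x < g y) :
    wordOf (L.map (Finset.image g)) = (wordOf L).map (WithBot.map g) := by
  rw [wordOf_eq, wordOf_eq, map_intercalate rfl]
  congr 1
  rw [List.map_map, List.map_map]
  apply List.map_congr_left
  intro B hB
  simp only [Function.comp]
  rw [sort_image (h B hB), List.map_map, List.map_map]
  rfl

lemma coe_mem_wordOf {L : SC} {x : ℕ} (h : x ∈ ground L) :
    WithBot.some x ∈ wordOf L := by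
  induction L with
  | nil => simp [ground] at h
  | cons B L ih =>
      have h' : x ∈ B ∪ ground L := h
      rw [Finset.mem_union] at h'
      cases L with
      | nil =>
          rw [wordOf_singleton]
          rcases h' with h' | h'
          · exact List.mem_map.2 ⟨x, (Finset.mem_sort _).2 h', rfl⟩
          · simp [ground] at h'
      | cons C L =>
          rw [wordOf_cons (by simp), List.mem_append]
          rcases h' with h' | h'
          · exact Or.inl (List.mem_map.2 ⟨x, (Finset.mem_sort _).2 h', rfl⟩)
          · exact Or.inr (List.mem_cons_of_mem _ (ih h'))

lemma eq_of_mem_wordOf {L : SC} {z : WithBot ℕ} (h : z ∈ wordOf L) :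
    z = ⊥ ∨ ∃ x ∈ ground L, z = WithBot.some x := by
  induction L with
  | nil =>
      rw [wordOf_eq] at h
      simp [List.intercalate] at h
  | cons B L ih =>
      have hBz : z ∈ (B.sort (· ≤ ·)).map WithBot.some →
          ∃ x ∈ B, z = WithBot.some x := by
        intro hz
        obtain ⟨x, hx, rfl⟩ := List.mem_map.1 hz
        exact ⟨x, (Finset.mem_sort _).1 hx, rfl⟩
      have hg : ∀ x ∈ B, x ∈ ground (B :: L) := fun x hx =>
        subset_ground List.mem_cons_self hx
      cases L with
      | nil =>
          rw [wordOf_singleton] at h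
          obtain ⟨x, hx, rfl⟩ := hBz h
          exact Or.inr ⟨x, hg x hx, rfl⟩
      | cons C L =>
          rw [wordOf_cons (by simp), List.mem_append, List.mem_cons] at h
          rcases h with h | h | h
          · obtain ⟨x, hx, rfl⟩ := hBz h
            exact Or.inr ⟨x, hg x hx, rfl⟩
          · exact Or.inl h
          · rcases ih h with h' | ⟨x, hx, rfl⟩
            · exact Or.inl h'
            · refine Or.inr ⟨x, ?_, rfl⟩
              have hx' : x ∈ ground (C :: L) := hx
              exact Finset.mem_union_right _ hx'

lemma lex_of_le_of_mem_lt {w : List (WithBot ℕ)} {F : WithBot ℕ → WithBot ℕ}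
    (hle : ∀ z ∈ w, z ≤ F z) (hlt : ∃ z ∈ w, z < F z) :
    List.Lex (· < ·) w (w.map F) := by
  induction w with
  | nil => simp at hlt
  | cons a w ih =>
      rw [List.map_cons]
      rcases lt_or_eq_of_le (hle a List.mem_cons_self) with h | h
      · exact List.Lex.rel h
      · rw [← h]
        apply List.Lex.cons
        apply ih (fun z hz => hle z (List.mem_cons_of_mem _ hz))
        rcases hlt with ⟨z, hz, hzlt⟩
        rcases List.mem_cons.1 hz with rfl | hz'
        · exact absurd h (ne_of_lt hzlt)
        · exact ⟨z, hz', hzlt⟩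

lemma lex_append {u v : List (WithBot ℕ)} (r t : List (WithBot ℕ)) (hlen : u.length = v.length)
    (h : List.Lex (· < ·) u v) : List.Lex (· < ·) (u ++ r) (v ++ t) := by
  induction u generalizing v with
  | nil =>
      cases v with
      | nil => cases h
      | cons b v => simp at hlen
  | cons a u ih =>
      cases v with
      | nil => simp at hlen
      | cons b v =>
          cases h with
          | rel hab => exact List.Lex.rel hab
          | cons h' => exact List.Lex.cons (ih (by simpa using hlen) h')

end Part2

section Part3

lemma relabel_parts {p : ℕ} {P : SC} (hP : IsSetComp p P) {A : Finset ℕ} (hc : A.card = p) :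
    (∀ B ∈ relabelSC (Finset.Icc 1 p) A P, B.Nonempty) ∧
      (relabelSC (Finset.Icc 1 p) A P).Pairwise Disjoint ∧
      ground (relabelSC (Finset.Icc 1 p) A P) = A := by
  obtain ⟨hne, hdis, hgr⟩ := hP
  refine ⟨?_, ?_, ?_⟩
  · intro B hB
    rw [relabelSC] at hB
    obtain ⟨C, hC, rfl⟩ := List.mem_map.1 hB
    exact (hne C hC).image _
  · rw [relabelSC, List.pairwise_map]
    apply List.Pairwise.imp_of_mem ?_ hdis
    intro B C hB hC hBC
    rw [Finset.disjoint_left]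
    intro a haB haC
    obtain ⟨x, hx, rfl⟩ := Finset.mem_image.1 haB
    obtain ⟨y, hy, hxy⟩ := Finset.mem_image.1 haC
    have hxg : x ∈ Finset.Icc 1 p := by rw [← hgr]; exact subset_ground hB hx
    have hyg : y ∈ Finset.Icc 1 p := by rw [← hgr]; exact subset_ground hC hy
    rw [Finset.mem_Icc] at hxg hyg
    have hxeq : y = x := relabelFun_injOn hc hyg.1 hyg.2 hxg.1 hxg.2 hxy
    exact Finset.disjoint_left.1 hBC hx (hxeq ▸ hy)
  · rw [relabelSC, ground_map_image, hgr, relabelFun_image hc]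

lemma U_setcomp {p q : ℕ} {P Q : SC} (hP : IsSetComp p P) (hQ : IsSetComp q Q) {A : Finset ℕ}
    (hA : A ⊆ Finset.Icc 1 (p+q)) (hc : A.card = p) :
    IsSetComp (p+q) (relabelSC (Finset.Icc 1 p) A P ++
      relabelSC (Finset.Icc 1 q) (Finset.Icc 1 (p+q) \ A) Q) := by
  have hcompc : (Finset.Icc 1 (p+q) \ A).card = q := by
    rw [Finset.card_sdiff_of_subset hA, Nat.card_Icc, hc]; omega
  obtain ⟨h1a, h1b, h1c⟩ := relabel_parts hP hc
  obtain ⟨h2a, h2b, h2c⟩ := relabel_parts hQ hcompc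
  refine ⟨?_, ?_, ?_⟩
  · intro B hB
    rcases List.mem_append.1 hB with hB | hB
    · exact h1a B hB
    · exact h2a B hB
  · rw [List.pairwise_append]
    refine ⟨h1b, h2b, ?_⟩
    intro B hB C hC
    apply Finset.disjoint_left.2
    intro a haB haC
    have h1 : a ∈ A := by rw [← h1c]; exact subset_ground hB haB
    have h2 : a ∈ Finset.Icc 1 (p+q) \ A := by rw [← h2c]; exact subset_ground hC haC
    exact (Finset.mem_sdiff.1 h2).2 h1
  · rw [ground_append, h1c, h2c, Finset.union_sdiff_of_subset hA]

lemma sdiff_Icc (p q : ℕ) :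
    Finset.Icc 1 (p+q) \ Finset.Icc 1 p = Finset.Icc (p+1) (p+q) := by
  ext x; simp only [Finset.mem_sdiff, Finset.mem_Icc]; omega

lemma barMul_eq_term {p q : ℕ} {P Q : SC} (hP : IsSetComp p P) (hQ : IsSetComp q Q) :
    relabelSC (Finset.Icc 1 p) (Finset.Icc 1 p) P ++
      relabelSC (Finset.Icc 1 q) (Finset.Icc 1 (p+q) \ Finset.Icc 1 p) Q = barMul P Q := by
  rw [sdiff_Icc, relabelSC_self hP.2.2, relabelSC_shift hQ.2.2, barMul, maxG_eq hP.2.2]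

lemma key_lex {p q : ℕ} {P Q : SC} (hP : IsSetComp p P) (hQ : IsSetComp q Q) {A : Finset ℕ}
    (hA : A ⊆ Finset.Icc 1 (p+q)) (hc : A.card = p) (hne : A ≠ Finset.Icc 1 p) :
    List.Lex (· < ·) (wordOf (barMul P Q))
      (wordOf (relabelSC (Finset.Icc 1 p) A P ++
        relabelSC (Finset.Icc 1 q) (Finset.Icc 1 (p+q) \ A) Q)) := by
  have hp1 : 1 ≤ p := by
    by_contra h
    have hp0 : p = 0 := by omega
    subst hp0
    rw [Finset.card_eq_zero] at hc
    exact hne (by rw [hc]; simp)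
  have hq1 : 1 ≤ q := by
    by_contra h
    have hq0 : q = 0 := by omega
    subst hq0
    exact hne (Finset.eq_of_subset_of_card_le (by simpa using hA)
      (by rw [hc, Nat.card_Icc]; omega))
  have hPne : P ≠ [] := by
    intro h
    have := hP.2.2
    rw [h] at this
    have h1 : (1 : ℕ) ∈ Finset.Icc 1 p := Finset.mem_Icc.2 ⟨le_rfl, hp1⟩
    rw [← this] at h1
    simp [ground] at h1
  have hQne : Q ≠ [] := by
    intro h
    have := hQ.2.2
    rw [h] at this
    have h1 : (1 : ℕ) ∈ Finset.Icc 1 q := Finset.mem_Icc.2 ⟨le_rfl, hq1⟩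
    rw [← this] at h1
    simp [ground] at h1
  have hpos : ∀ t ∈ A, 1 ≤ t := fun t ht => (Finset.mem_Icc.1 (hA ht)).1
  have hmono : ∀ B ∈ P, ∀ x ∈ B, ∀ y ∈ B, x < y →
      relabelFun (Finset.Icc 1 p) A x < relabelFun (Finset.Icc 1 p) A y := by
    intro B hB x hx y hy hxy
    have hxg : x ∈ Finset.Icc 1 p := by rw [← hP.2.2]; exact subset_ground hB hx
    have hyg : y ∈ Finset.Icc 1 p := by rw [← hP.2.2]; exact subset_ground hB hy
    rw [Finset.mem_Icc] at hxg hyg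
    exact relabelFun_strictMonoOn hc hxg.1 hxy hyg.2
  rw [barMul, maxG_eq hP.2.2]
  rw [wordOf_append hPne (by simpa [shiftSC] using hQne),
    wordOf_append (by simpa [relabelSC] using hPne) (by simpa [relabelSC] using hQne)]
  rw [show relabelSC (Finset.Icc 1 p) A P = P.map (Finset.image (relabelFun (Finset.Icc 1 p) A))
    from rfl]
  rw [wordOf_map_image hmono]
  apply lex_append _ _ (by rw [List.length_map])
  obtain ⟨x₀, ⟨hx1, hx2⟩, hlt_eq, hge_gt⟩ := relabelFun_threshold hpos hc hne
  apply lex_of_le_of_mem_lt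
  · intro z hz
    rcases eq_of_mem_wordOf hz with rfl | ⟨x, hx, rfl⟩
    · simp
    · have hxg : x ∈ Finset.Icc 1 p := by rw [← hP.2.2]; exact hx
      rw [Finset.mem_Icc] at hxg
      show WithBot.some x ≤ WithBot.some (relabelFun (Finset.Icc 1 p) A x)
      exact WithBot.coe_le_coe.2 (relabelFun_ge hpos hc hxg.1 hxg.2)
  · refine ⟨WithBot.some x₀, coe_mem_wordOf ?_, ?_⟩
    · rw [hP.2.2]; exact Finset.mem_Icc.2 ⟨hx1, hx2⟩
    · show WithBot.some x₀ < WithBot.some (relabelFun (Finset.Icc 1 p) A x₀)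
      exact WithBot.coe_lt_coe.2 (hge_gt x₀ le_rfl hx2)

lemma key_llOrd {p q : ℕ} {P Q : SC} (hP : IsSetComp p P) (hQ : IsSetComp q Q) {A : Finset ℕ}
    (hA : A ⊆ Finset.Icc 1 (p+q)) (hc : A.card = p) (hne : A ≠ Finset.Icc 1 p) :
    llOrd (barMul P Q) (relabelSC (Finset.Icc 1 p) A P ++
      relabelSC (Finset.Icc 1 q) (Finset.Icc 1 (p+q) \ A) Q) := by
  have hbar : IsSetComp (p+q) (barMul P Q) := by
    rw [← barMul_eq_term hP hQ]
    exact U_setcomp hP hQ (Finset.Icc_subset_Icc_right (by omega)) (by rw [Nat.card_Icc]; omega)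
  exact Or.inr ⟨by rw [hbar.2.2, (U_setcomp hP hQ hA hc).2.2], key_lex hP hQ hA hc hne⟩

end Part3

/-- **Theorem (triangularity).** For all set compositions `P ∈ Comp_p` and
`Q ∈ Comp_q`, the difference `P ∗̂ Q − P ∗̄ Q` is a ℤ-linear combination of set
compositions `U ∈ Comp_{p+q}` with `P ∗̄ Q ≪ U`. -/

theorem hat_bar_triangularity (p q : ℕ) (P Q : SC)
    (hP : IsSetComp p P) (hQ : IsSetComp q Q) :
    hatL ℤ (Finsupp.single P 1) (Finsupp.single Q 1) - Finsupp.single (barMul P Q) 1 ∈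
      Submodule.span ℤ
        {f : FM ℤ | ∃ U : SC, IsSetComp (p + q) U ∧ llOrd (barMul P Q) U ∧
          f = Finsupp.single U 1} := by
  have hmaxP : maxG P = p := maxG_eq hP.2.2
  have hmaxQ : maxG Q = q := maxG_eq hQ.2.2
  have hhat : hatL ℤ (Finsupp.single P 1) (Finsupp.single Q 1) = hatB ℤ P Q := by
    simp [hatL, Finsupp.lift_apply, Finsupp.sum_single_index]
  have hexp : hatB ℤ P Q =
      ∑ A ∈ (Finset.Icc 1 (p+q)).powerset.filter (fun A => A.card = p),
        Finsupp.single (relabelSC (Finset.Icc 1 p) A P ++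
          relabelSC (Finset.Icc 1 q) (Finset.Icc 1 (p+q) \ A) Q) (1:ℤ) := by
    unfold hatB
    rw [hmaxP, hmaxQ]
  rw [hhat, hexp]
  have hmem : Finset.Icc 1 p ∈
      (Finset.Icc 1 (p+q)).powerset.filter (fun A => A.card = p) := by
    rw [Finset.mem_filter, Finset.mem_powerset]
    exact ⟨Finset.Icc_subset_Icc_right (by omega), by rw [Nat.card_Icc]; omega⟩
  rw [← Finset.add_sum_erase _ _ hmem, barMul_eq_term hP hQ, add_sub_cancel_left]
  apply Submodule.sum_mem
  intro A hA
  rw [Finset.mem_erase, Finset.mem_filter, Finset.mem_powerset] at hA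
  obtain ⟨hne, hsub, hcard⟩ := hA
  apply Submodule.subset_span
  exact ⟨_, U_setcomp hP hQ hsub hcard, key_llOrd hP hQ hsub hcard hne, rfl⟩
end

section
/- The ℤ-linear map ι: S_• → T_• sending α ∈ S_n to ({α(1)},…,{α(n)}) is injective and is a morphism of graded bialgebras from the Malvenuto–Reutenauer Hopf algebra (S_•, ∗, δ̄) to (T_•, ∗̂, δ̄): for all permutations α, β one has ι(α ∗ β) = ι(α) ∗̂ ι(β), and δ̄(ι(α)) = (ι ⊗ ι)(δ̄(α)). Hence the Malvenuto–Reutenauer Hopf algebra embeds into (T_•, ∗̂, δ̄) as a Hopf subalgebra. -/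
set_option linter.unreachableTactic false
set_option linter.unusedTactic false
set_option maxHeartbeats 1000000


open Finset

variable (R : Type) [CommRing R]

/-- `w` is the word `(α(1),…,α(n))` of a permutation `α ∈ S_n`. -/
def IsPermWord (n : ℕ) (w : List ℕ) : Prop := w.Nodup ∧ w.toFinset = Finset.Icc 1 n

/-- The embedding of permutations into set compositions:
`α ↦ ({α(1)},…,{α(n)})`. -/
def iotaW (w : List ℕ) : SC := w.map fun a => ({a} : Finset ℕ)

/-- Concatenation product of permutation words: `α × β = α · (β + n)`. -/
def concatW (u v : List ℕ) : List ℕ := u ++ v.map (· + u.length)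

/-- `st(w|_S)`: the subword of `w` of entries lying in `S`, standardized. -/
def stW (S : Finset ℕ) (w : List ℕ) : List ℕ :=
  (w.filter fun a => decide (a ∈ S)).map (rankIn S)

/-- The ℤ-linear embedding `ι : S_• → T_•`, `α ↦ ({α(1)},…,{α(n)})`. -/
noncomputable def iotaL : (List ℕ →₀ ℤ) →ₗ[ℤ] FM ℤ :=
  Finsupp.lift _ ℤ _ fun w => Finsupp.single (iotaW w) 1

/-- `ι ⊗ ι : S_• ⊗ S_• → T_• ⊗ T_•`. -/
noncomputable def iota2L : ((List ℕ × List ℕ) →₀ ℤ) →ₗ[ℤ] FM2 ℤ :=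
  Finsupp.lift _ ℤ _ fun uv => Finsupp.single (iotaW uv.1, iotaW uv.2) 1

/-- The Malvenuto–Reutenauer convolution product on `S_•` on basis elements:
`α ∗ β = q_{(n,m)} · (α × β)`, where `q_{(n,m)}` is the sum of all permutations
increasing on the first `n` and on the last `m` letters (each such permutation
being recorded by the set `A` of its first `n` values). -/
noncomputable def mrB (α β : List ℕ) : List ℕ →₀ ℤ :=
  ∑ A ∈ ((Finset.Icc 1 (α.length + β.length)).powerset.filter
      fun A => A.card = α.length),
    Finsupp.single
      ((concatW α β).map fun i =>
        ((A.sort (· ≤ ·)) ++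
          (((Finset.Icc 1 (α.length + β.length)) \ A).sort (· ≤ ·))).getD (i - 1) 0) 1

/-- The restricted coproduct on `S_•`:
`δ̄(α) = Σ_{i=0}^{n} α|_{[i]} ⊗ st(α|_{{i+1,…,n}})`. -/
noncomputable def dBarS : (List ℕ →₀ ℤ) →ₗ[ℤ] ((List ℕ × List ℕ) →₀ ℤ) :=
  Finsupp.lift _ ℤ _ fun w =>
    ∑ i ∈ Finset.range (w.length + 1),
      Finsupp.single
        (w.filter (fun a => decide (a ≤ i)),
          (w.filter (fun a => decide (i < a))).map (fun a => a - i)) 1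


lemma rankIn_Icc_one (p a : ℕ) (h1 : 1 ≤ a) (h2 : a ≤ p) : rankIn (Finset.Icc 1 p) a = a := by
  have : (Finset.Icc 1 p).filter (· ≤ a) = Finset.Icc 1 a := by
    ext y; simp only [Finset.mem_filter, Finset.mem_Icc]; omega
  rw [rankIn, this, Nat.card_Icc]; omega

lemma rankIn_Icc_succ (p n a : ℕ) (h1 : p + 1 ≤ a) (h2 : a ≤ n) :
    rankIn (Finset.Icc (p+1) n) a = a - p := by
  have : (Finset.Icc (p+1) n).filter (· ≤ a) = Finset.Icc (p+1) a := by
    ext y; simp only [Finset.mem_filter, Finset.mem_Icc]; omega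
  rw [rankIn, this, Nat.card_Icc]; omega

lemma ground_iotaW (w : List ℕ) : ground (iotaW w) = w.toFinset := by
  induction w with
  | nil => rfl
  | cons a t ih =>
      simp [iotaW, ground] at ih ⊢
      rw [ih, Finset.insert_eq]

lemma sup_Icc_one (n : ℕ) : (Finset.Icc 1 n).sup id = n := by
  cases n with
  | zero => simp
  | succ m =>
      apply le_antisymm
      · exact Finset.sup_le fun x hx => (Finset.mem_Icc.mp hx).2
      · exact Finset.le_sup (f := id) (Finset.mem_Icc.mpr ⟨by omega, le_refl _⟩)

lemma maxG_iotaW {n : ℕ} {α : List ℕ} (h : IsPermWord n α) : maxG (iotaW α) = n := by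
  rw [maxG, ground_iotaW, h.2, sup_Icc_one]

lemma length_perm {n : ℕ} {α : List ℕ} (h : IsPermWord n α) : α.length = n := by
  have := List.toFinset_card_of_nodup h.1
  rw [h.2, Nat.card_Icc] at this
  omega

lemma mem_perm {n : ℕ} {α : List ℕ} (h : IsPermWord n α) {a : ℕ} (ha : a ∈ α) :
    1 ≤ a ∧ a ≤ n := by
  have : a ∈ α.toFinset := List.mem_toFinset.mpr ha
  rw [h.2, Finset.mem_Icc] at this
  exact this

lemma iotaW_append (u v : List ℕ) : iotaW (u ++ v) = iotaW u ++ iotaW v :=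
  List.map_append

lemma relabelSC_iotaW (S T : Finset ℕ) (w : List ℕ) :
    relabelSC S T (iotaW w) = iotaW (w.map (relabelFun S T)) := by
  simp [relabelSC, iotaW, List.map_map, Function.comp_def]

lemma restrictSC_iotaW (A : Finset ℕ) (w : List ℕ) :
    restrictSC A (iotaW w) = iotaW ((w.filter fun a => decide (a ∈ A)).map (rankIn A)) := by
  induction w with
  | nil => rfl
  | cons a t ih =>
      by_cases ha : a ∈ A
      · simp [restrictSC, iotaW, List.filter_cons, ha,
          Finset.singleton_inter_of_mem ha] at ih ⊢
        exact ih
      · simp [restrictSC, iotaW, List.filter_cons, ha,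
          Finset.singleton_inter_of_notMem ha] at ih ⊢
        exact ih

lemma iotaL_single (w : List ℕ) : iotaL (Finsupp.single w 1) = Finsupp.single (iotaW w) 1 := by
  simp [iotaL, Finsupp.lift_apply, Finsupp.sum_single_index]

lemma iotaL_eq_mapDomain (f : List ℕ →₀ ℤ) : iotaL f = Finsupp.mapDomain iotaW f := by
  simp [iotaL, Finsupp.lift_apply, Finsupp.mapDomain, Finsupp.smul_single]

/-- **Theorem.** The ℤ-linear map `ι : S_• → T_•`, `α ↦ ({α(1)},…,{α(n)})`, is
an injective morphism of graded bialgebras from the Malvenuto–Reutenauer Hopf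
algebra `(S_•, ∗, δ̄)` to `(T_•, ∗̂, δ̄)` : `ι(α ∗ β) = ι(α) ∗̂ ι(β)` and
`δ̄(ι(α)) = (ι ⊗ ι)(δ̄(α))`.  Hence the Malvenuto–Reutenauer Hopf algebra
embeds into `(T_•, ∗̂, δ̄)` as a Hopf subalgebra. -/
theorem malvenuto_reutenauer_embedding :
    Function.Injective ⇑iotaL ∧
    (∀ (m k : ℕ) (α β : List ℕ), IsPermWord m α → IsPermWord k β →
        iotaL (mrB α β) =
          hatL ℤ (Finsupp.single (iotaW α) 1) (Finsupp.single (iotaW β) 1)) ∧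
    (∀ (n : ℕ) (α : List ℕ), IsPermWord n α →
        dBarL ℤ (Finsupp.single (iotaW α) 1) = iota2L (dBarS (Finsupp.single α 1))) := by
  refine ⟨?_, ?_, ?_⟩
  · intro f g h
    have hinj : Function.Injective iotaW :=
      fun a b hab => List.map_injective_iff.mpr Finset.singleton_injective hab
    apply Finsupp.mapDomain_injective hinj
    rw [← iotaL_eq_mapDomain, ← iotaL_eq_mapDomain, h]
  · intro m k α β hα hβ
    have hm := maxG_iotaW hα
    have hk := maxG_iotaW hβ
    have hlα := length_perm hα
    have hlβ := length_perm hβ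
    have hhat : hatL ℤ (Finsupp.single (iotaW α) 1) (Finsupp.single (iotaW β) 1)
        = hatB ℤ (iotaW α) (iotaW β) := by
      simp [hatL, Finsupp.lift_apply, Finsupp.sum_single_index]
    rw [hhat, hatB, hm, hk, mrB, map_sum, hlα, hlβ]
    apply Finset.sum_congr rfl
    intro A hA
    obtain ⟨hAsub, hAcard⟩ := Finset.mem_filter.mp hA
    rw [Finset.mem_powerset] at hAsub
    rw [iotaL_single]
    congr 1
    rw [relabelSC_iotaW, relabelSC_iotaW, ← iotaW_append]
    refine congrArg iotaW ?_
    rw [concatW, List.map_append, List.map_map, hlα]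
    congr 1
    · apply List.map_congr_left
      intro a ha
      obtain ⟨h1, h2⟩ := mem_perm hα ha
      have hlen : (A.sort (· ≤ ·)).length = m := by
        rw [Finset.length_sort, hAcard]
      rw [List.getD_append _ _ _ _ (by omega : a - 1 < (A.sort (· ≤ ·)).length),
        relabelFun, rankIn_Icc_one m a h1 h2]
    · apply List.map_congr_left
      intro b hb
      obtain ⟨h1, h2⟩ := mem_perm hβ hb
      have hlen : (A.sort (· ≤ ·)).length = m := by
        rw [Finset.length_sort, hAcard]
      simp only [Function.comp_apply]
      rw [List.getD_append_right _ _ _ _ (by omega : (A.sort (· ≤ ·)).length ≤ b + m - 1),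
        relabelFun, rankIn_Icc_one k b h1 h2, hlen]
      congr 1
      omega
  · intro n α hα
    have hn := maxG_iotaW hα
    have hl := length_perm hα
    have hbar : dBarL ℤ (Finsupp.single (iotaW α) 1)
        = ∑ p ∈ Finset.range (maxG (iotaW α) + 1),
            Finsupp.single
              (restrictSC (Finset.Icc 1 p) (iotaW α),
               restrictSC (Finset.Icc (p+1) (maxG (iotaW α))) (iotaW α)) 1 := by
      simp [dBarL, Finsupp.lift_apply, Finsupp.sum_single_index]
    have hbarS : dBarS (Finsupp.single α 1)
        = ∑ i ∈ Finset.range (α.length + 1),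
            Finsupp.single
              (α.filter (fun a => decide (a ≤ i)),
               (α.filter (fun a => decide (i < a))).map (fun a => a - i)) 1 := by
      simp [dBarS, Finsupp.lift_apply, Finsupp.sum_single_index]
    have hiota2 : ∀ uv : List ℕ × List ℕ,
        iota2L (Finsupp.single uv 1) = Finsupp.single (iotaW uv.1, iotaW uv.2) 1 := by
      intro uv
      simp [iota2L, Finsupp.lift_apply, Finsupp.sum_single_index]
    rw [hbar, hbarS, map_sum, hn, hl]
    apply Finset.sum_congr rfl
    intro p _
    rw [hiota2]
    congr 1
    refine Prod.ext ?_ ?_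
    · show restrictSC (Finset.Icc 1 p) (iotaW α)
        = iotaW (α.filter (fun a => decide (a ≤ p)))
      rw [restrictSC_iotaW]
      refine congrArg iotaW ?_
      have hf : α.filter (fun a => decide (a ∈ Finset.Icc 1 p))
          = α.filter (fun a => decide (a ≤ p)) := by
        apply List.filter_congr
        intro a ha
        obtain ⟨h1, h2⟩ := mem_perm hα ha
        simp [Finset.mem_Icc, h1]
      rw [hf]
      conv_rhs => rw [← List.map_id (α.filter (fun a => decide (a ≤ p)))]
      apply List.map_congr_left
      intro a ha
      obtain ⟨ha1, ha2⟩ := List.mem_filter.mp ha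
      obtain ⟨h1, h2⟩ := mem_perm hα ha1
      exact rankIn_Icc_one p a h1 (by simpa using ha2)
    · show restrictSC (Finset.Icc (p+1) n) (iotaW α)
        = iotaW ((α.filter (fun a => decide (p < a))).map (fun a => a - p))
      rw [restrictSC_iotaW]
      refine congrArg iotaW ?_
      have hf : α.filter (fun a => decide (a ∈ Finset.Icc (p+1) n))
          = α.filter (fun a => decide (p < a)) := by
        apply List.filter_congr
        intro a ha
        obtain ⟨h1, h2⟩ := mem_perm hα ha
        simp only [Finset.mem_Icc, decide_eq_decide]
        omega
      rw [hf]
      apply List.map_congr_left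
      intro a ha
      obtain ⟨ha1, ha2⟩ := List.mem_filter.mp ha
      obtain ⟨h1, h2⟩ := mem_perm hα ha1
      exact rankIn_Icc_succ p n a (by simpa using ha2) h2
end
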